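/- Let H be a complex Hilbert space and let D, τ be bounded self-adjoint operators on H with τ² = 1 and Dτ + τD = 0. Set g(x) = x/√(1+x²), h(x) = 1/√(1+x²), and G := g(D) − τ h(D). Then τG is a unitary operator satisfying τ (τG) τ = (τG)*, the operator 1 − τG is invertible, and 1 does not belong to the spectrum of τG. -/

import Mathlib

set_option maxHeartbeats 1000000 in
/-- For a symmetry `τ` anticommuting with the self-adjoint `D` and
`G = g(D) - τ h(D)` (with `g(x) = x/√(1+x²)`, `h(x) = 1/√(1+x²)`): the operator `τG` is
unitary with `τ (τG) τ = (τG)*`, the operator `1 - τG` is invertible, and `1` is not in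
the spectrum of `τG`. -/
theorem stmt_6 {H : Type*} [NormedAddCommGroup H] [InnerProductSpace ℂ H] [CompleteSpace H]
    (D τ : H →L[ℂ] H) (hD : IsSelfAdjoint D) (hτ : IsSelfAdjoint τ)
    (hτ2 : τ * τ = 1) (hanti : D * τ + τ * D = 0)
    (G : H →L[ℂ] H)
    (hG : G = cfc (fun x : ℝ => x / Real.sqrt (1 + x ^ 2)) D -
      τ * cfc (fun x : ℝ => 1 / Real.sqrt (1 + x ^ 2)) D) :
    τ * G ∈ unitary (H →L[ℂ] H) ∧ τ * (τ * G) * τ = star (τ * G) ∧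
      IsUnit (1 - τ * G) ∧ (1 : ℂ) ∉ spectrum ℂ (τ * G) := by
  have hsq : ∀ x : ℝ, Real.sqrt (1 + x ^ 2) ≠ 0 := fun x => by positivity
  have hcg : Continuous (fun x : ℝ => x / Real.sqrt (1 + x ^ 2)) :=
    continuous_id.div (by fun_prop) hsq
  have hch : Continuous (fun x : ℝ => 1 / Real.sqrt (1 + x ^ 2)) :=
    continuous_const.div (by fun_prop) hsq
  set gf : ℝ → ℝ := fun x : ℝ => x / Real.sqrt (1 + x ^ 2) with hgf
  set hf : ℝ → ℝ := fun x : ℝ => 1 / Real.sqrt (1 + x ^ 2) with hhf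
  set g : H →L[ℂ] H := cfc gf D with hg
  set h : H →L[ℂ] H := cfc hf D with hh
  -- conjugation by τ is a star algebra homomorphism
  have hτDτ : τ * D * τ = -D := by
    have h1 : D * τ = -(τ * D) := eq_neg_of_add_eq_zero_left hanti
    calc τ * D * τ = τ * (D * τ) := by noncomm_ring
    _ = -(τ * τ * D) := by rw [h1]; noncomm_ring
    _ = -D := by rw [hτ2]; noncomm_ring
  have hstarτ : star τ = τ := hτ
  let φ : (H →L[ℂ] H) →⋆ₐ[ℂ] (H →L[ℂ] H) :=
    { toFun := fun x => τ * x * τ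
      map_one' := by simpa using hτ2
      map_mul' := fun x y => by
        show τ * (x * y) * τ = (τ * x * τ) * (τ * y * τ)
        calc τ * (x * y) * τ = (τ * x) * (τ * τ) * (y * τ) := by rw [hτ2]; noncomm_ring
        _ = (τ * x * τ) * (τ * y * τ) := by noncomm_ring
      map_zero' := by simp
      map_add' := fun x y => by simp [mul_add, add_mul]
      commutes' := fun c => by
        simp only [Algebra.algebraMap_eq_smul_one]
        rw [mul_smul_comm, smul_mul_assoc, mul_one, hτ2]
      map_star' := fun x => by simp [star_mul, hstarτ, mul_assoc] }
  have hφcont : Continuous φ := by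
    have : Continuous fun x : H →L[ℂ] H => τ * x * τ := by continuity
    exact this
  have hconj : ∀ f : ℝ → ℝ, Continuous f →
      τ * cfc f D * τ = cfc (fun x => f (-x)) D := by
    intro f hf'
    have h1 : φ (cfc f D) = cfc f (φ D) :=
      StarAlgHomClass.map_cfc φ f D (hf'.continuousOn) hφcont hD
        (by show IsSelfAdjoint (τ * D * τ); rw [hτDτ]; exact hD.neg)
    have h2 : φ D = -D := hτDτ
    have h3 : cfc (fun x => f (-x)) D = cfc f (-D) :=
      cfc_comp_neg f D (hf'.continuousOn) hD
    show φ (cfc f D) = _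
    rw [h1, h2, h3]
  -- g is odd, h is even
  have hτg : τ * g * τ = -g := by
    rw [hg, hconj gf hcg]
    have : (fun x : ℝ => gf (-x)) = fun x => -gf x := by
      funext x; simp [hgf, neg_div]
    rw [this, cfc_neg]
  have hτh : τ * h * τ = h := by
    rw [hh, hconj hf hch]
    congr 1
    funext x; simp [hhf]
  have hgτ : g * τ = -(τ * g) := by
    calc g * τ = (τ * τ) * (g * τ) := by rw [hτ2]; noncomm_ring
    _ = τ * (τ * g * τ) := by noncomm_ring
    _ = -(τ * g) := by rw [hτg]; noncomm_ring
  have hhτ : h * τ = τ * h := by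
    calc h * τ = (τ * τ) * (h * τ) := by rw [hτ2]; noncomm_ring
    _ = τ * (τ * h * τ) := by noncomm_ring
    _ = τ * h := by rw [hτh]
  -- g and h commute
  have hcomm : g * h = h * g := by
    rw [hg, hh, ← cfc_mul _ _ D hcg.continuousOn hch.continuousOn,
      ← cfc_mul _ _ D hch.continuousOn hcg.continuousOn]
    congr 1; funext x; ring
  -- g² + h² = 1
  have hgh1 : g * g + h * h = 1 := by
    rw [hg, hh, ← cfc_mul _ _ D hcg.continuousOn hcg.continuousOn,
      ← cfc_mul _ _ D hch.continuousOn hch.continuousOn,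
      ← cfc_add D (fun x => gf x * gf x) (fun x => hf x * hf x) ((hcg.mul hcg).continuousOn) ((hch.mul hch).continuousOn)]
    have : (fun x => gf x * gf x + hf x * hf x) = fun _ : ℝ => (1 : ℝ) := by
      funext x
      have hs : Real.sqrt (1 + x ^ 2) * Real.sqrt (1 + x ^ 2) = 1 + x ^ 2 :=
        Real.mul_self_sqrt (by positivity)
      simp only [hgf, hhf]
      rw [div_mul_div_comm, div_mul_div_comm, ← add_div, one_mul, hs]
      rw [div_eq_one_iff_eq (by positivity)]
      ring
    rw [this]
    exact cfc_const_one ℝ D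
  -- the operator U = τG
  have hU : τ * G = τ * g - h := by
    rw [hG, mul_sub, ← mul_assoc, hτ2, one_mul]
  have hgsa : IsSelfAdjoint g := by rw [hg]; exact cfc_predicate _ D
  have hhsa : IsSelfAdjoint h := by rw [hh]; exact cfc_predicate _ D
  have hstarU : star (τ * G) = -(τ * g) - h := by
    rw [hU, star_sub, star_mul, hstarτ, hgsa.star_eq, hhsa.star_eq, hgτ]
  have hgτg : (τ * g) * (τ * g) = -(g * g) := by
    calc (τ * g) * (τ * g) = τ * (g * τ) * g := by noncomm_ring
    _ = τ * (-(τ * g)) * g := by rw [hgτ]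
    _ = -((τ * τ) * (g * g)) := by noncomm_ring
    _ = -(g * g) := by rw [hτ2]; noncomm_ring
  have hhτg : h * (τ * g) = (τ * g) * h := by
    calc h * (τ * g) = (h * τ) * g := by noncomm_ring
    _ = τ * (h * g) := by rw [hhτ]; noncomm_ring
    _ = τ * (g * h) := by rw [hcomm]
    _ = (τ * g) * h := by noncomm_ring
  have huni : τ * G ∈ unitary (H →L[ℂ] H) := by
    rw [Unitary.mem_iff, hstarU, hU]
    constructor
    · calc (-(τ * g) - h) * (τ * g - h)
          = -((τ * g) * (τ * g)) + ((τ * g) * h - h * (τ * g)) + h * h := by noncomm_ring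
      _ = g * g + ((τ * g) * h - (τ * g) * h) + h * h := by rw [hgτg, hhτg]; noncomm_ring
      _ = 1 := by rw [← hgh1]; noncomm_ring
    · calc (τ * g - h) * (-(τ * g) - h)
          = -((τ * g) * (τ * g)) + (h * (τ * g) - (τ * g) * h) + h * h := by noncomm_ring
      _ = g * g + ((τ * g) * h - (τ * g) * h) + h * h := by rw [hgτg, hhτg]; noncomm_ring
      _ = 1 := by rw [← hgh1]; noncomm_ring
  have hconjU : τ * (τ * G) * τ = star (τ * G) := by
    rw [hstarU, hU]
    calc τ * (τ * g - h) * τ = (τ * τ) * (g * τ) - τ * h * τ := by noncomm_ring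
    _ = -(τ * g) - h := by rw [hτ2, hgτ, hτh]; noncomm_ring
  -- invertibility of 1 - τG
  have hsum : 1 - (τ * G) - star (τ * G) + 1 = (2 : ℂ) • (1 + h) := by
    rw [hstarU, hU, two_smul]
    abel
  have hposunit : IsUnit ((1 : H →L[ℂ] H) + h) := by
    have h1 : (1 : H →L[ℂ] H) + h = cfc (fun x => 1 + hf x) D := by
      rw [hh, cfc_add D _ _ (continuousOn_const) hch.continuousOn, cfc_const_one ℝ D]
    rw [h1]
    refine isUnit_cfc _ D ((continuous_const.add hch).continuousOn) hD (fun x _ => ?_)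
    have h0 : 0 < hf x := by simp only [hhf]; positivity
    exact (by linarith : (0:ℝ) < 1 + hf x).ne'
  have h2unit : IsUnit ((2 : ℂ) • ((1 : H →L[ℂ] H) + h)) := by
    have he : (2:ℂ) • ((1 : H →L[ℂ] H) + h) = ((2:ℂ) • (1 : H →L[ℂ] H)) * (1 + h) := by
      rw [smul_mul_assoc, one_mul]
    rw [he]
    have h2 : IsUnit ((2:ℂ) • (1 : H →L[ℂ] H)) := by
      rw [← Algebra.algebraMap_eq_smul_one]
      exact (isUnit_iff_ne_zero.mpr two_ne_zero).map (algebraMap ℂ (H →L[ℂ] H))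
    exact h2.mul hposunit
  have hfactor : star (1 - τ * G) * (1 - τ * G) = (2 : ℂ) • (1 + h) := by
    have hUU : star (τ * G) * (τ * G) = 1 := (Unitary.mem_iff.mp huni).1
    rw [star_sub, star_one]
    calc (1 - star (τ * G)) * (1 - τ * G)
        = 1 - (τ * G) - star (τ * G) + star (τ * G) * (τ * G) := by noncomm_ring
    _ = (2 : ℂ) • (1 + h) := by rw [hUU, hsum]
  have hfactor' : (1 - τ * G) * star (1 - τ * G) = (2 : ℂ) • (1 + h) := by
    have hUU : (τ * G) * star (τ * G) = 1 := (Unitary.mem_iff.mp huni).2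
    rw [star_sub, star_one]
    calc (1 - τ * G) * (1 - star (τ * G))
        = 1 - (τ * G) - star (τ * G) + (τ * G) * star (τ * G) := by noncomm_ring
    _ = (2 : ℂ) • (1 + h) := by rw [hUU, hsum]
  have hinv : IsUnit (1 - τ * G) := by
    obtain ⟨v, hv⟩ := h2unit
    set A := 1 - τ * G with hA
    have hl : ((v⁻¹ : _) * star A) * A = 1 := by
      rw [mul_assoc, hfactor, ← hv, ← Units.val_mul, inv_mul_cancel, Units.val_one]
    have hr : A * (star A * (v⁻¹ : _)) = 1 := by
      rw [← mul_assoc, hfactor', ← hv, ← Units.val_mul, mul_inv_cancel, Units.val_one]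
    have heq : ((v⁻¹ : _) * star A) = (star A * (v⁻¹ : _)) := by
      calc ((v⁻¹ : _) * star A) = ((v⁻¹ : _) * star A) * (A * (star A * (v⁻¹ : _))) := by
            rw [hr, mul_one]
      _ = (((v⁻¹ : _) * star A) * A) * (star A * (v⁻¹ : _)) := by noncomm_ring
      _ = (star A * (v⁻¹ : _)) := by rw [hl, one_mul]
    exact isUnit_iff_exists.mpr ⟨(star A * (v⁻¹ : _)), hr, by rw [← heq, hl]⟩
  refine ⟨huni, hconjU, hinv, ?_⟩
  rw [spectrum.notMem_iff]
  simpa using hinv
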